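/- For any density matrix ρ, C_a(ρ) ≤ S(Δ(ρ)), and for d ≥ 4 there exists a density matrix ρ with Δ(ρ) = (1/d)·I such that C_a(ρ) < S(Δ(ρ)) = log d. -/

import Mathlib

open Matrix BigOperators Complex ComplexOrder

noncomputable section

variable {ι : Type*} [Fintype ι] [DecidableEq ι]

/-- The square root of a positive semidefinite matrix, as defined in the older Mathlib
(`Matrix.PosSemidef.sqrt`, since removed). -/
def Matrix.PosSemidef.sqrt {n : Type*} [Fintype n] [DecidableEq n] {A : Matrix n n ℂ}
    (hA : A.PosSemidef) : Matrix n n ℂ :=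
  hA.1.eigenvectorUnitary.1 * diagonal ((↑) ∘ Real.sqrt ∘ hA.1.eigenvalues) *
    (star hA.1.eigenvectorUnitary : Matrix n n ℂ)

/-- A density matrix: positive semidefinite with unit trace. -/
def IsDensityMatrix (ρ : Matrix ι ι ℂ) : Prop := ρ.PosSemidef ∧ ρ.trace = 1

/-- The rank-one projector |ψ⟩⟨ψ| associated to a vector. -/
def pureState (ψ : ι → ℂ) : Matrix ι ι ℂ := Matrix.of fun i j => ψ i * (starRingEnd ℂ) (ψ j)

/-- The trace norm ‖A‖₁ = Tr √(AᴴA). -/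
def traceNorm (A : Matrix ι ι ℂ) : ℝ :=
  ((Matrix.posSemidef_conjTranspose_mul_self A).sqrt.trace).re

open Classical in
/-- Matrix square root (junk value 0 on matrices that are not PSD). -/
def matSqrt (A : Matrix ι ι ℂ) : Matrix ι ι ℂ := if h : A.PosSemidef then h.sqrt else 0

/-- Fidelity F(ρ,σ) = ‖√ρ√σ‖₁². -/
def fidelity (ρ σ : Matrix ι ι ℂ) : ℝ := (traceNorm (matSqrt ρ * matSqrt σ))^2

/-- The dephasing map Δ, keeping only the diagonal. -/
def deph (ρ : Matrix ι ι ℂ) : Matrix ι ι ℂ := Matrix.diagonal (fun i => ρ i i)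

/-- The m-distillation norm ‖ψ‖_{[m]} = min_x (‖ψ-x‖₁ + √m ‖x‖₂). -/
def distNorm (m : ℕ) (ψ : ι → ℂ) : ℝ :=
  ⨅ x : ι → ℂ, ((∑ i, ‖ψ i - x i‖) +
    Real.sqrt m * Real.sqrt (∑ i, (‖x i‖)^2))

/-- M_m: convex combinations of pure states with ℓ∞ norm at most 1/√m. -/
def Mset (m : ℕ) : Set (Matrix ι ι ℂ) :=
  {ω | ∃ (n : ℕ) (p : Fin n → ℝ) (ψ : Fin n → ι → ℂ),
    (∀ i, 0 ≤ p i) ∧ (∑ i, p i = 1) ∧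
    (∀ i, ∑ j, (‖ψ i j‖)^2 = 1) ∧
    (∀ i j, ‖ψ i j‖ ≤ 1 / Real.sqrt m) ∧
    ω = ∑ i, p i • pureState (ψ i)}

/-- N_m: density matrices with all diagonal entries at most 1/m. -/
def Nset (m : ℕ) : Set (Matrix ι ι ℂ) :=
  {ω | IsDensityMatrix ω ∧ ∀ i, (ω i i).re ≤ 1 / m}

/-- Optimal fidelity of assisted distillation F_A(ρ,m) = max_{ω ∈ M_m} F(ρ,ω). -/
def FA (ρ : Matrix ι ι ℂ) (m : ℕ) : ℝ :=
  sSup {r : ℝ | ∃ ω ∈ Mset (ι := ι) m, r = fidelity ρ ω}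


/-- Coherence of assistance, as a supremum over pure-state decompositions. -/
def Ca {d : ℕ} (ρ : Matrix (Fin d) (Fin d) ℂ) : ℝ :=
  sSup {r : ℝ | ∃ (n : ℕ) (p : Fin n → ℝ) (ψ : Fin n → Fin d → ℂ),
    (∀ i, 0 ≤ p i) ∧ (∑ i, p i = 1) ∧
    (∀ i, ∑ j, (‖ψ i j‖)^2 = 1) ∧
    ρ = ∑ i, p i • pureState (ψ i) ∧
    r = ∑ i, p i * (∑ j, Real.negMulLog ((‖ψ i j‖)^2))}

namespace Stmt16Helper

/-- Strict entropy bound: if the distribution is not uniform, entropy < log d. -/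
lemma entropy_lt_log {d : ℕ} (hd : 0 < d) (q : Fin d → ℝ) (hq0 : ∀ j, 0 ≤ q j)
    (hq1 : ∑ j, q j = 1) (hne : ∃ j, q j ≠ (d : ℝ)⁻¹) :
    ∑ j, Real.negMulLog (q j) < Real.log d := by
  have hdR : (0:ℝ) < d := by exact_mod_cast hd
  set g : Fin d → ℝ := fun j => q j * Real.log (d * q j) with hg
  have key : ∀ j, q j - (d:ℝ)⁻¹ ≤ g j := by
    intro j
    rcases eq_or_lt_of_le (hq0 j) with h0 | h0
    · have hgj : g j = 0 := by simp [hg, ← h0]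
      have hdi : (0:ℝ) ≤ (d:ℝ)⁻¹ := by positivity
      rw [hgj, ← h0]
      linarith
    · have hx : (0:ℝ) < d * q j := by positivity
      have hlog : 1 - (d * q j)⁻¹ ≤ Real.log (d * q j) := by
        have := Real.log_le_sub_one_of_pos (inv_pos.mpr hx)
        rw [Real.log_inv] at this
        linarith
      have h2 : q j * (1 - (d * q j)⁻¹) ≤ g j :=
        mul_le_mul_of_nonneg_left hlog (le_of_lt h0)
      have h3 : q j * (1 - (d * q j)⁻¹) = q j - (d:ℝ)⁻¹ := by
        field_simp
      linarith [h3 ▸ h2]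
  have strict : ∀ j, q j ≠ (d:ℝ)⁻¹ → q j - (d:ℝ)⁻¹ < g j := by
    intro j hj
    rcases eq_or_lt_of_le (hq0 j) with h0 | h0
    · have : g j = 0 := by simp [hg, ← h0]
      rw [this, ← h0]
      simp
      positivity
    · have hx : (0:ℝ) < d * q j := by positivity
      have hx1 : d * q j ≠ 1 := by
        intro h
        apply hj
        field_simp at h ⊢
        linarith
      have hlog : 1 - (d * q j)⁻¹ < Real.log (d * q j) := by
        have := Real.log_lt_sub_one_of_pos (inv_pos.mpr hx) (by
          simpa using inv_ne_one.mpr hx1)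
        rw [Real.log_inv] at this
        linarith
      have h2 : q j * (1 - (d * q j)⁻¹) < g j :=
        (mul_lt_mul_of_pos_left hlog h0)
      have h3 : q j * (1 - (d * q j)⁻¹) = q j - (d:ℝ)⁻¹ := by
        field_simp
      linarith [h3 ▸ h2]
  obtain ⟨j₀, hj₀⟩ := hne
  have hsum0 : ∑ j, (q j - (d:ℝ)⁻¹) = 0 := by
    rw [Finset.sum_sub_distrib, hq1]
    simp [Finset.card_univ]
    field_simp
    norm_num
  have hlt : ∑ j, (q j - (d:ℝ)⁻¹) < ∑ j, g j :=
    Finset.sum_lt_sum (fun j _ => key j) ⟨j₀, Finset.mem_univ _, strict j₀ hj₀⟩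
  have hpos : 0 < ∑ j, g j := by rw [← hsum0]; exact hlt
  have hdecomp : ∑ j, g j = Real.log d - ∑ j, Real.negMulLog (q j) := by
    have : ∀ j, g j = q j * Real.log d - Real.negMulLog (q j) := by
      intro j
      rcases eq_or_lt_of_le (hq0 j) with h0 | h0
      · simp [hg, ← h0]
      · rw [hg]
        simp only [Real.negMulLog]
        rw [Real.log_mul (by positivity) (ne_of_gt h0)]
        ring
    rw [Finset.sum_congr rfl (fun j _ => this j), Finset.sum_sub_distrib, ← Finset.sum_mul, hq1,
      one_mul]
  linarith [hdecomp ▸ hpos]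



def auxU : ℕ → ℂ := fun k =>
  if k % 4 = 0 then 1 else if k % 4 = 1 then 0 else ((Real.sqrt 2)⁻¹ : ℝ)

def auxV : ℕ → ℂ := fun k =>
  if k % 4 = 0 then 0 else if k % 4 = 1 then 1 else if k % 4 = 2 then ((Real.sqrt 2)⁻¹ : ℝ)
  else ((Real.sqrt 2)⁻¹ : ℝ) * Complex.I

lemma half : ((Real.sqrt 2)⁻¹ : ℝ) * (Real.sqrt 2)⁻¹ = 2⁻¹ := by
  rw [← mul_inv, Real.mul_self_sqrt (by norm_num)]

lemma aux_normSq (k : ℕ) : Complex.normSq (auxU k) + Complex.normSq (auxV k) = 1 := by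
  have h : k % 4 = 0 ∨ k % 4 = 1 ∨ k % 4 = 2 ∨ k % 4 = 3 := by omega
  rcases h with h | h | h | h <;>
    simp [auxU, auxV, h, Complex.normSq_ofReal, Complex.normSq_mul, Complex.normSq_I, half] <;>
    norm_num [half]

lemma aux_mul_conj (k : ℕ) :
    auxU k * (starRingEnd ℂ) (auxU k) + auxV k * (starRingEnd ℂ) (auxV k) = 1 := by
  rw [Complex.mul_conj, Complex.mul_conj, ← Complex.ofReal_add, aux_normSq, Complex.ofReal_one]

/-- The witness density matrix for dimension d. -/
def rho (d : ℕ) : Matrix (Fin d) (Fin d) ℂ :=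
  Matrix.of fun j k => (d : ℂ)⁻¹ *
    (auxU j.val * (starRingEnd ℂ) (auxU k.val) + auxV j.val * (starRingEnd ℂ) (auxV k.val))

lemma rho_diag {d : ℕ} (j : Fin d) : rho d j j = (d : ℂ)⁻¹ := by
  simp [rho, aux_mul_conj]

/-- Quadratic form identity helper. -/
lemma sum_quad {d : ℕ} (w x : Fin d → ℂ) :
    (∑ j, ∑ k, (starRingEnd ℂ) (x j) * (w j * (starRingEnd ℂ) (w k)) * x k) =
      (starRingEnd ℂ) (∑ k, (starRingEnd ℂ) (w k) * x k) * (∑ k, (starRingEnd ℂ) (w k) * x k) := by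
  rw [map_sum, Finset.sum_mul_sum]
  exact Finset.sum_congr rfl fun j _ => Finset.sum_congr rfl fun k _ => by
    simp only [_root_.map_mul, Complex.conj_conj]; ring

/-- Quadratic form of rho. -/
lemma rho_quad {d : ℕ} (x : Fin d → ℂ) :
    (∑ j, ∑ k, (starRingEnd ℂ) (x j) * (rho d j k) * x k) =
      (d : ℂ)⁻¹ * ((starRingEnd ℂ) (∑ k, (starRingEnd ℂ) (auxU k.val) * x k) *
          (∑ k, (starRingEnd ℂ) (auxU k.val) * x k)
        + (starRingEnd ℂ) (∑ k, (starRingEnd ℂ) (auxV k.val) * x k) *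
          (∑ k, (starRingEnd ℂ) (auxV k.val) * x k)) := by
  calc ∑ j, ∑ k, (starRingEnd ℂ) (x j) * (rho d j k) * x k
      = ∑ j, ∑ k, ((d : ℂ)⁻¹ * ((starRingEnd ℂ) (x j) * (auxU j.val * (starRingEnd ℂ) (auxU k.val)) * x k)
        + (d : ℂ)⁻¹ * ((starRingEnd ℂ) (x j) * (auxV j.val * (starRingEnd ℂ) (auxV k.val)) * x k)) := by
        refine Finset.sum_congr rfl fun j _ => Finset.sum_congr rfl fun k _ => ?_
        simp only [rho, Matrix.of_apply]; ring
    _ = _ := by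
        simp only [Finset.sum_add_distrib, ← Finset.mul_sum]
        rw [sum_quad, sum_quad]
        ring

/-- Quadratic form via a pure-state decomposition. -/
lemma rho_quad_dec {n d : ℕ} (p : Fin n → ℝ) (ψ : Fin n → Fin d → ℂ) (x : Fin d → ℂ)
    (hρ : rho d = ∑ i, p i • pureState (ψ i)) :
    (∑ j, ∑ k, (starRingEnd ℂ) (x j) * (rho d j k) * x k) =
      ∑ i, p i • ((starRingEnd ℂ) (∑ k, (starRingEnd ℂ) (ψ i k) * x k) *
        (∑ k, (starRingEnd ℂ) (ψ i k) * x k)) := by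
  calc ∑ j, ∑ k, (starRingEnd ℂ) (x j) * (rho d j k) * x k
      = ∑ j, ∑ k, ∑ i, p i • ((starRingEnd ℂ) (x j) * (ψ i j * (starRingEnd ℂ) (ψ i k)) * x k) := by
        refine Finset.sum_congr rfl fun j _ => Finset.sum_congr rfl fun k _ => ?_
        rw [hρ]
        simp only [Matrix.sum_apply, Matrix.smul_apply, pureState, Matrix.of_apply,
          Finset.mul_sum, Finset.sum_mul]
        exact Finset.sum_congr rfl fun i _ => by
          rw [Complex.real_smul, Complex.real_smul]; ring
    _ = ∑ i, ∑ j, ∑ k, p i • ((starRingEnd ℂ) (x j) * (ψ i j * (starRingEnd ℂ) (ψ i k)) * x k) := by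
        rw [Finset.sum_congr rfl fun j (_ : j ∈ Finset.univ) => Finset.sum_comm, Finset.sum_comm]
    _ = _ := by
        refine Finset.sum_congr rfl fun i _ => ?_
        rw [← sum_quad (ψ i) x, Finset.smul_sum]
        exact Finset.sum_congr rfl fun j _ => by rw [Finset.smul_sum]

/-- Every component of a pure-state decomposition of rho lies in span{U,V}. -/
lemma mem_span {d : ℕ} {n : ℕ} (p : Fin n → ℝ) (ψ : Fin n → Fin d → ℂ)
    (hp0 : ∀ i, 0 ≤ p i)
    (hρ : rho d = ∑ i, p i • pureState (ψ i)) (i : Fin n) (hpi : 0 < p i) :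
    ∃ a b : ℂ, ∀ k : Fin d, a * auxU k.val + b * auxV k.val = ψ i k := by
  set U' : EuclideanSpace ℂ (Fin d) :=
    (WithLp.equiv 2 (Fin d → ℂ)).symm (fun j => auxU j.val) with hU'
  set V' : EuclideanSpace ℂ (Fin d) :=
    (WithLp.equiv 2 (Fin d → ℂ)).symm (fun j => auxV j.val) with hV'
  set ψ' : EuclideanSpace ℂ (Fin d) := (WithLp.equiv 2 (Fin d → ℂ)).symm (ψ i) with hψ'
  set T : Submodule ℂ (EuclideanSpace ℂ (Fin d)) := Submodule.span ℂ {U', V'} with hT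
  have hmem : ψ' ∈ T := by
    rw [← Submodule.orthogonal_orthogonal T]
    rw [Submodule.mem_orthogonal]
    intro x hx
    have hxU : (inner ℂ U' x : ℂ) = 0 :=
      (Submodule.mem_orthogonal T x).mp hx U' (Submodule.subset_span (by simp))
    have hxV : (inner ℂ V' x : ℂ) = 0 :=
      (Submodule.mem_orthogonal T x).mp hx V' (Submodule.subset_span (by simp))
    have hα : (∑ k, (starRingEnd ℂ) (auxU k.val) * x k) = 0 := by
      simpa [PiLp.inner_apply, RCLike.inner_apply', hU', mul_comm] using hxU
    have hβ : (∑ k, (starRingEnd ℂ) (auxV k.val) * x k) = 0 := by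
      simpa [PiLp.inner_apply, RCLike.inner_apply', hV', mul_comm] using hxV
    have h1 : (∑ j, ∑ k, (starRingEnd ℂ) (x j) * (rho d j k) * x k) = 0 := by
      rw [rho_quad, hα, hβ]; simp
    have h2 := rho_quad_dec p ψ x hρ
    rw [h1] at h2
    have h3 : (0:ℂ) = ∑ i', ((p i' * Complex.normSq (∑ k, (starRingEnd ℂ) (ψ i' k) * x k) : ℝ) : ℂ) := by
      rw [h2]
      refine Finset.sum_congr rfl fun i' _ => ?_
      rw [mul_comm, Complex.mul_conj, Complex.real_smul, ← Complex.ofReal_mul]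
    rw [← Complex.ofReal_sum] at h3
    have h4 : (0:ℝ) = ∑ i', p i' * Complex.normSq (∑ k, (starRingEnd ℂ) (ψ i' k) * x k) := by
      exact_mod_cast h3
    have h5 := (Finset.sum_eq_zero_iff_of_nonneg (fun i' _ =>
      mul_nonneg (hp0 i') (Complex.normSq_nonneg _))).mp h4.symm i (Finset.mem_univ i)
    have h6 : Complex.normSq (∑ k, (starRingEnd ℂ) (ψ i k) * x k) = 0 := by
      rcases mul_eq_zero.mp h5 with h | h
      · exact absurd h (ne_of_gt hpi)
      · exact h
    have h7 : (∑ k, (starRingEnd ℂ) (ψ i k) * x k) = 0 := Complex.normSq_eq_zero.mp h6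
    have h8 : (inner ℂ ψ' x : ℂ) = 0 := by
      simpa [PiLp.inner_apply, RCLike.inner_apply', hψ', mul_comm] using h7
    rw [← inner_conj_symm, h8, map_zero]
  obtain ⟨a, b, hab⟩ := Submodule.mem_span_pair.mp hmem
  refine ⟨a, b, fun k => ?_⟩
  have := congrArg (fun v => v k) hab
  simpa [hU', hV', hψ', WithLp.equiv_symm_apply, smul_eq_mul] using this

lemma rho_isDensity {d : ℕ} (hd : 4 ≤ d) : IsDensityMatrix (rho d) := by
  have hd0 : (d : ℂ) ≠ 0 := by
    have : (0:ℕ) < d := by omega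
    exact_mod_cast Nat.cast_ne_zero.mpr (by omega)
  constructor
  · rw [Matrix.posSemidef_iff_dotProduct_mulVec]
    constructor
    · ext j k
      simp only [rho, Matrix.conjTranspose_apply, Matrix.of_apply, RCLike.star_def, map_add,
        _root_.map_mul, Complex.conj_conj, map_inv₀, map_natCast]
      ring
    · intro x
      set α := ∑ k, (starRingEnd ℂ) (auxU k.val) * x k with hα
      set β := ∑ k, (starRingEnd ℂ) (auxV k.val) * x k with hβ
      have hQ : star x ⬝ᵥ (rho d) *ᵥ x =
          (d : ℂ)⁻¹ * ((starRingEnd ℂ) α * α + (starRingEnd ℂ) β * β) := by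
        have expand : star x ⬝ᵥ (rho d) *ᵥ x =
            ∑ j, ∑ k, (starRingEnd ℂ) (x j) * (rho d j k) * x k := by
          simp only [dotProduct, Matrix.mulVec, Pi.star_apply, RCLike.star_def,
            Finset.mul_sum]
          exact Finset.sum_congr rfl fun j _ => Finset.sum_congr rfl fun k _ => by ring
        rw [expand]
        calc ∑ j, ∑ k, (starRingEnd ℂ) (x j) * (rho d j k) * x k
            = ∑ j, ∑ k, ((d : ℂ)⁻¹ * ((starRingEnd ℂ) (x j) * (auxU j.val * (starRingEnd ℂ) (auxU k.val)) * x k)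
              + (d : ℂ)⁻¹ * ((starRingEnd ℂ) (x j) * (auxV j.val * (starRingEnd ℂ) (auxV k.val)) * x k)) := by
              refine Finset.sum_congr rfl fun j _ => Finset.sum_congr rfl fun k _ => ?_
              simp only [rho, Matrix.of_apply]; ring
          _ = (d : ℂ)⁻¹ * ((starRingEnd ℂ) α * α + (starRingEnd ℂ) β * β) := by
              simp only [Finset.sum_add_distrib, ← Finset.mul_sum]
              rw [sum_quad, sum_quad]
              ring
      rw [hQ, hα, hβ]
      rw [mul_comm ((starRingEnd ℂ) α) α, mul_comm ((starRingEnd ℂ) β) β,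
        Complex.mul_conj, Complex.mul_conj]
      rw [← Complex.ofReal_add]
      have : ((d : ℂ))⁻¹ * ((Complex.normSq α + Complex.normSq β : ℝ) : ℂ)
          = (((d : ℝ)⁻¹ * (Complex.normSq α + Complex.normSq β) : ℝ) : ℂ) := by
        push_cast; ring
      rw [this, Complex.zero_le_real]
      exact mul_nonneg (by positivity)
        (add_nonneg (Complex.normSq_nonneg α) (Complex.normSq_nonneg β))
  · simp only [Matrix.trace, Matrix.diag]
    rw [Finset.sum_congr rfl fun j _ => rho_diag j]
    simp [Finset.card_univ]
    field_simp

end Stmt16Helper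


namespace Stmt16Helper
end Stmt16Helper

namespace Stmt16Helper

lemma auxU0 : auxU 0 = 1 := by norm_num [auxU]
lemma auxU1 : auxU 1 = 0 := by norm_num [auxU]
lemma auxU2 : auxU 2 = ((Real.sqrt 2)⁻¹ : ℝ) := by norm_num [auxU]
lemma auxU3 : auxU 3 = ((Real.sqrt 2)⁻¹ : ℝ) := by norm_num [auxU]
lemma auxV0 : auxV 0 = 0 := by norm_num [auxV]
lemma auxV1 : auxV 1 = 1 := by norm_num [auxV]
lemma auxV2 : auxV 2 = ((Real.sqrt 2)⁻¹ : ℝ) := by norm_num [auxV]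
lemma auxV3 : auxV 3 = ((Real.sqrt 2)⁻¹ : ℝ) * Complex.I := by norm_num [auxV]

lemma not_uniform {d : ℕ} (hd : 4 ≤ d) (a : ℂ × ℂ) :
    ∃ j : Fin d, Complex.normSq (a.1 * auxU j.val + a.2 * auxV j.val) ≠ (d : ℝ)⁻¹ := by
  by_contra hcon
  push_neg at hcon
  have hdpos : (0:ℝ) < d := by
    have : (0:ℕ) < d := by omega
    exact_mod_cast this
  have hdinv : (0:ℝ) < (d:ℝ)⁻¹ := by positivity
  have e0 := hcon ⟨0, by omega⟩
  have e1 := hcon ⟨1, by omega⟩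
  have e2 := hcon ⟨2, by omega⟩
  have e3 := hcon ⟨3, by omega⟩
  rw [show ((⟨0, by omega⟩ : Fin d) : ℕ) = 0 from rfl, auxU0, auxV0] at e0
  rw [show ((⟨1, by omega⟩ : Fin d) : ℕ) = 1 from rfl, auxU1, auxV1] at e1
  rw [show ((⟨2, by omega⟩ : Fin d) : ℕ) = 2 from rfl, auxU2, auxV2] at e2
  rw [show ((⟨3, by omega⟩ : Fin d) : ℕ) = 3 from rfl, auxU3, auxV3] at e3
  simp only [mul_one, mul_zero, add_zero, zero_add] at e0 e1
  have e2' : Complex.normSq (a.1 + a.2) = 2 * (d:ℝ)⁻¹ := by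
    rw [show a.1 * ((Real.sqrt 2)⁻¹ : ℝ) + a.2 * ((Real.sqrt 2)⁻¹ : ℝ)
        = (a.1 + a.2) * ((Real.sqrt 2)⁻¹ : ℝ) from by ring,
      Complex.normSq_mul, Complex.normSq_ofReal, half] at e2
    linarith
  have e3' : Complex.normSq (a.1 + a.2 * Complex.I) = 2 * (d:ℝ)⁻¹ := by
    rw [show a.1 * ((Real.sqrt 2)⁻¹ : ℝ) + a.2 * (((Real.sqrt 2)⁻¹ : ℝ) * Complex.I)
        = (a.1 + a.2 * Complex.I) * ((Real.sqrt 2)⁻¹ : ℝ) from by ring,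
      Complex.normSq_mul, Complex.normSq_ofReal, half] at e3
    linarith
  have hre : (a.1 * (starRingEnd ℂ) a.2).re = 0 := by
    have := Complex.normSq_add a.1 a.2
    rw [e2', e0, e1] at this
    linarith
  have him : (a.1 * (starRingEnd ℂ) a.2).im = 0 := by
    have h4 := Complex.normSq_add a.1 (a.2 * Complex.I)
    rw [e3', Complex.normSq_mul, Complex.normSq_I, mul_one, e0, e1] at h4
    have h5 : (a.1 * (starRingEnd ℂ) (a.2 * Complex.I)).re
        = (a.1 * (starRingEnd ℂ) a.2).im := by
      simp [Complex.mul_re, Complex.mul_im, Complex.conj_re, Complex.conj_im,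
        Complex.I_re, Complex.I_im]
      ring
    rw [h5] at h4
    linarith
  have hz : a.1 * (starRingEnd ℂ) a.2 = 0 := by
    apply Complex.ext <;> simp [hre, him]
  have hns : Complex.normSq (a.1 * (starRingEnd ℂ) a.2) = (d:ℝ)⁻¹ * (d:ℝ)⁻¹ := by
    rw [Complex.normSq_mul, Complex.normSq_conj, e0, e1]
  rw [hz, map_zero] at hns
  nlinarith

lemma exists_max {d : ℕ} (hd : 4 ≤ d) :
    ∃ M : ℝ, 0 ≤ M ∧ M < Real.log d ∧
      ∀ a : ℂ × ℂ, (∑ j : Fin d, Complex.normSq (a.1 * auxU j.val + a.2 * auxV j.val)) = 1 →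
        (∑ j : Fin d, Real.negMulLog (Complex.normSq (a.1 * auxU j.val + a.2 * auxV j.val))) ≤ M := by
  have hdpos : (0:ℕ) < d := by omega
  set f : ℂ × ℂ → Fin d → ℝ :=
    fun a j => Complex.normSq (a.1 * auxU j.val + a.2 * auxV j.val) with hf
  have hfc : ∀ j, Continuous fun a => f a j := fun j =>
    Complex.continuous_normSq.comp
      ((continuous_fst.mul continuous_const).add (continuous_snd.mul continuous_const))
  set S : Set (ℂ × ℂ) := {a | ∑ j, f a j = 1} with hS
  have hg : Continuous fun a => ∑ j, f a j := continuous_finset_sum _ (fun j _ => hfc j)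
  have hclosed : IsClosed S := isClosed_eq hg continuous_const
  have hbdd : Bornology.IsBounded S := by
    apply Bornology.IsBounded.subset (Metric.isBounded_closedBall (x := (0 : ℂ × ℂ)) (r := 1))
    intro a ha
    have h1 : ∀ j, f a j ≤ 1 := by
      intro j
      rw [← ha]
      exact Finset.single_le_sum (f := fun j' => f a j')
        (fun j' _ => Complex.normSq_nonneg _) (Finset.mem_univ j)
    have ha1 : Complex.normSq a.1 ≤ 1 := by
      have := h1 ⟨0, by omega⟩
      rw [hf] at this
      simpa [show ((⟨0, by omega⟩ : Fin d) : ℕ) = 0 from rfl, auxU0, auxV0] using this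
    have ha2 : Complex.normSq a.2 ≤ 1 := by
      have := h1 ⟨1, by omega⟩
      rw [hf] at this
      simpa [show ((⟨1, by omega⟩ : Fin d) : ℕ) = 1 from rfl, auxU1, auxV1] using this
    rw [Metric.mem_closedBall, dist_zero_right, Prod.norm_def]
    apply max_le
    · nlinarith [norm_nonneg a.1, Complex.sq_norm a.1]
    · nlinarith [norm_nonneg a.2, Complex.sq_norm a.2]
  have hScomp : IsCompact S := Metric.isCompact_of_isClosed_isBounded hclosed hbdd
  have hSne : S.Nonempty := by
    set N : ℝ := ∑ j : Fin d, Complex.normSq (auxU j.val) with hN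
    have hN1 : (1:ℝ) ≤ N := by
      have := Finset.single_le_sum (f := fun j : Fin d => Complex.normSq (auxU j.val))
        (fun j' _ => Complex.normSq_nonneg _) (Finset.mem_univ (⟨0, by omega⟩ : Fin d))
      simpa [show ((⟨0, by omega⟩ : Fin d) : ℕ) = 0 from rfl, auxU0] using this
    have hNpos : (0:ℝ) < N := by linarith
    set t : ℝ := (Real.sqrt N)⁻¹ with ht
    refine ⟨((t : ℂ), 0), ?_⟩
    show (∑ j, f ((t : ℂ), 0) j) = 1
    have : ∀ j : Fin d, f ((t : ℂ), 0) j = t * t * Complex.normSq (auxU j.val) := by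
      intro j
      rw [hf]
      simp [Complex.normSq_mul, Complex.normSq_ofReal]
    rw [Finset.sum_congr rfl fun j _ => this j, ← Finset.mul_sum, ← hN, ht]
    rw [← Real.sqrt_inv]
    rw [Real.mul_self_sqrt (by positivity)]
    field_simp
  set Φ : ℂ × ℂ → ℝ := fun a => ∑ j, Real.negMulLog (f a j) with hΦ
  have hΦc : Continuous Φ :=
    continuous_finset_sum _ (fun j _ => Real.continuous_negMulLog.comp (hfc j))
  obtain ⟨a₀, ha₀S, hmax⟩ := hScomp.exists_isMaxOn hSne hΦc.continuousOn
  have ha₀sum : ∑ j, f a₀ j = 1 := ha₀S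
  refine ⟨Φ a₀, ?_, ?_, ?_⟩
  · apply Finset.sum_nonneg
    intro j _
    apply Real.negMulLog_nonneg (Complex.normSq_nonneg _)
    rw [← ha₀sum]
    exact Finset.single_le_sum (f := fun j' => f a₀ j')
      (fun j' _ => Complex.normSq_nonneg _) (Finset.mem_univ j)
  · exact entropy_lt_log hdpos (f a₀) (fun j => Complex.normSq_nonneg _) ha₀sum
      (not_uniform hd a₀)
  · intro a ha
    exact hmax (show a ∈ S from ha)

end Stmt16Helper

theorem stmt16 (d : ℕ) :
    (∀ ρ : Matrix (Fin d) (Fin d) ℂ, IsDensityMatrix ρ →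
      ∀ (n : ℕ) (p : Fin n → ℝ) (ψ : Fin n → Fin d → ℂ),
        (∀ i, 0 ≤ p i) → (∑ i, p i = 1) →
        (∀ i, ∑ j, ‖ψ i j‖^2 = 1) →
        ρ = ∑ i, p i • pureState (ψ i) →
        ∑ i, p i * (∑ j, Real.negMulLog (‖ψ i j‖^2)) ≤
          ∑ j, Real.negMulLog (ρ j j).re) ∧
    (4 ≤ d → ∃ ρ : Matrix (Fin d) (Fin d) ℂ, IsDensityMatrix ρ ∧
      (∀ j, ρ j j = (d : ℂ)⁻¹) ∧ Ca ρ < Real.log d) := by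
  constructor
  · intro ρ _ n p ψ hp0 hp1 hψ hρ
    have hdiag : ∀ j, (ρ j j).re = ∑ i, p i * ‖ψ i j‖^2 := by
      intro j
      rw [hρ, Matrix.sum_apply, Complex.re_sum]
      refine Finset.sum_congr rfl fun i _ => ?_
      simp [pureState, Matrix.smul_apply, Complex.real_smul, Complex.mul_conj, Complex.sq_norm,
        ← Complex.ofReal_mul]
    calc ∑ i, p i * (∑ j, Real.negMulLog (‖ψ i j‖^2))
        = ∑ j, ∑ i, p i * Real.negMulLog (‖ψ i j‖^2) := by
          simp only [Finset.mul_sum]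
          exact Finset.sum_comm
      _ ≤ ∑ j, Real.negMulLog ((ρ j j).re) := by
          refine Finset.sum_le_sum fun j _ => ?_
          rw [hdiag j]
          have := Real.concaveOn_negMulLog.le_map_sum (t := Finset.univ) (w := p)
            (p := fun i => ‖ψ i j‖^2) (fun i _ => hp0 i) hp1
            (fun i _ => Set.mem_Ici.mpr (by positivity))
          simpa using this
  · intro hd4
    obtain ⟨M, hM0, hMlt, hMbound⟩ := Stmt16Helper.exists_max hd4
    refine ⟨Stmt16Helper.rho d, Stmt16Helper.rho_isDensity hd4,
      fun j => Stmt16Helper.rho_diag j, ?_⟩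
    apply lt_of_le_of_lt _ hMlt
    apply Real.sSup_le _ hM0
    rintro r ⟨n, p, ψ, hp0, hp1, hψn, hρdec, rfl⟩
    calc ∑ i, p i * (∑ j, Real.negMulLog (‖ψ i j‖^2))
        ≤ ∑ i, p i * M := by
          refine Finset.sum_le_sum fun i _ => ?_
          rcases eq_or_lt_of_le (hp0 i) with h0 | h0
          · rw [← h0]; simp
          · refine mul_le_mul_of_nonneg_left ?_ (hp0 i)
            obtain ⟨a, b, hab⟩ := Stmt16Helper.mem_span p ψ hp0 hρdec i h0
            have hval : ∀ j : Fin d,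
                Complex.normSq (a * Stmt16Helper.auxU j.val + b * Stmt16Helper.auxV j.val)
                  = ‖ψ i j‖^2 := by
              intro j
              rw [hab j, ← Complex.sq_norm]
            have hmemS : ∑ j : Fin d,
                Complex.normSq (a * Stmt16Helper.auxU j.val + b * Stmt16Helper.auxV j.val)
                  = 1 := by
              rw [Finset.sum_congr rfl fun j _ => hval j, hψn i]
            have hbd := hMbound (a, b) (by simpa using hmemS)
            calc ∑ j, Real.negMulLog (‖ψ i j‖^2)
                = ∑ j : Fin d, Real.negMulLog
                    (Complex.normSq (a * Stmt16Helper.auxU j.val + b * Stmt16Helper.auxV j.val)) := by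
                  exact (Finset.sum_congr rfl fun j _ => by rw [hval j]).symm
              _ ≤ M := by simpa using hbd
      _ = M := by rw [← Finset.sum_mul, hp1, one_mul]


end
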